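/- Let (X, 𝔅, μ) be a probability space, b ∈ (1, ∞], λ > ν ≥ 0, Δ := λ − ν, Z ≥ 0, and ψ ∈ Ψ(b). Suppose f : X → ℝ is measurable with N := sup_{p ∈ [1, b)} |f|_p / ψ(p) < ∞, and g : X → ℝ is measurable with |g|_p ≤ Z · p^λ/(p−1)^ν · |f|_p for every p ∈ (1, b). Define ζ(p) := p^Δ · ψ(p) for p ∈ [1, b). Then sup_{p ∈ [1, b)} |g|_p / ζ(p) ≤ Z · N · K_ν[ζ, b], where K_ν[ζ, b] = inf_{q ∈ (1, b)} (q/(q−1))^ν · q^Δ · ψ(q). -/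

import Mathlib

open MeasureTheory ENNReal Real Set

/-- **Theorem 4.1.** An operator of type `(λ, ν)` with `λ > ν ≥ 0` maps `Gψ` into the
Grand Lebesgue Space `Gζ` with `ζ(p) = p^Δ ψ(p)`, `Δ = λ - ν`, with norm at most
`Z · K_ν[ζ,b]`, where `K_ν[ζ,b] = inf_{q ∈ (1,b)} (q/(q-1))^ν q^Δ ψ(q)`. -/
theorem thm_4_1 {X : Type*} [MeasurableSpace X] (μ : Measure X) [IsProbabilityMeasure μ]
    (b : EReal) (hb : 1 < b) (lam nu Z : ℝ) (hnu : 0 ≤ nu) (hnulam : nu < lam) (hZ : 0 ≤ Z)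
    (ψ : ℝ → ℝ)
    (hψcont : ContinuousOn ψ {p : ℝ | 1 ≤ p ∧ (p : EReal) < b})
    (hψone : ∀ p : ℝ, 1 ≤ p → (p : EReal) < b → 1 ≤ ψ p)
    (f g : X → ℝ) (hf : Measurable f) (hg : Measurable g)
    (hN : (⨆ (p : ℝ) (_ : 1 ≤ p) (_ : (p : EReal) < b),
        eLpNorm f (ENNReal.ofReal p) μ / ENNReal.ofReal (ψ p)) < ⊤)
    (hQ : ∀ p : ℝ, 1 < p → (p : EReal) < b →
      eLpNorm g (ENNReal.ofReal p) μ ≤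
        ENNReal.ofReal (Z * p ^ lam / (p - 1) ^ nu) * eLpNorm f (ENNReal.ofReal p) μ) :
    (⨆ (p : ℝ) (_ : 1 ≤ p) (_ : (p : EReal) < b),
        eLpNorm g (ENNReal.ofReal p) μ / ENNReal.ofReal (p ^ (lam - nu) * ψ p)) ≤
      ENNReal.ofReal (Z *
          sInf ((fun q : ℝ => (q / (q - 1)) ^ nu * q ^ (lam - nu) * ψ q) ''
            {q : ℝ | 1 < q ∧ (q : EReal) < b})) *
        (⨆ (p : ℝ) (_ : 1 ≤ p) (_ : (p : EReal) < b),
          eLpNorm f (ENNReal.ofReal p) μ / ENNReal.ofReal (ψ p)) := by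
  classical
  set N := (⨆ (p : ℝ) (_ : 1 ≤ p) (_ : (p : EReal) < b),
      eLpNorm f (ENNReal.ofReal p) μ / ENNReal.ofReal (ψ p)) with hNdef
  have hNtop : N ≠ ⊤ := hN.ne
  have hfN : ∀ p : ℝ, 1 ≤ p → (p : EReal) < b →
      eLpNorm f (ENNReal.ofReal p) μ ≤ ENNReal.ofReal (ψ p) * N := by
    intro p hp hpb
    have hψp : (1:ℝ) ≤ ψ p := hψone p hp hpb
    have h0 : ENNReal.ofReal (ψ p) ≠ 0 := by
      simp only [ne_eq, ENNReal.ofReal_eq_zero, not_le]; linarith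
    have h1 : eLpNorm f (ENNReal.ofReal p) μ / ENNReal.ofReal (ψ p) ≤ N :=
      le_iSup_of_le p (le_iSup_of_le hp (le_iSup_of_le hpb le_rfl))
    have h2 := (ENNReal.div_le_iff h0 ENNReal.ofReal_ne_top).mp h1
    rwa [mul_comm] at h2
  refine iSup_le fun p => iSup_le fun hp => iSup_le fun hpb => ?_
  have hp0 : (0:ℝ) < p := lt_of_lt_of_le one_pos hp
  have hψp : (1:ℝ) ≤ ψ p := hψone p hp hpb
  have hζp : (1:ℝ) ≤ p ^ (lam - nu) * ψ p := by
    have h1 : (1:ℝ) ≤ p ^ (lam - nu) := Real.one_le_rpow hp (by linarith)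
    nlinarith
  have hζ0 : ENNReal.ofReal (p ^ (lam - nu) * ψ p) ≠ 0 := by
    simp only [ne_eq, ENNReal.ofReal_eq_zero, not_le]; linarith
  have hζ1 : (1:ℝ≥0∞) ≤ ENNReal.ofReal (p ^ (lam - nu) * ψ p) := by
    rw [← ENNReal.ofReal_one]; exact ENNReal.ofReal_le_ofReal hζp
  have key : ∀ q : ℝ, 1 < q → (q : EReal) < b →
      eLpNorm g (ENNReal.ofReal p) μ / ENNReal.ofReal (p ^ (lam - nu) * ψ p) ≤
        ENNReal.ofReal (Z * ((q / (q - 1)) ^ nu * q ^ (lam - nu) * ψ q)) * N := by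
    intro q hq1 hqb
    have hq0 : (0:ℝ) < q := lt_trans one_pos hq1
    have hq1' : (0:ℝ) < q - 1 := by linarith
    have hψq : (1:ℝ) ≤ ψ q := hψone q hq1.le hqb
    have hqn : (q - 1) ^ nu ≠ 0 := (Real.rpow_pos_of_pos hq1' nu).ne'
    have hqn' : q ^ nu ≠ 0 := (Real.rpow_pos_of_pos hq0 nu).ne'
    rcases le_or_gt p q with hpq | hqp
    · have hmono : eLpNorm g (ENNReal.ofReal p) μ ≤ eLpNorm g (ENNReal.ofReal q) μ :=
        eLpNorm_le_eLpNorm_of_exponent_le (ENNReal.ofReal_le_ofReal hpq)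
          hg.aestronglyMeasurable
      have h2 := hQ q hq1 hqb
      have h3 := hfN q hq1.le hqb
      have hcoef : Z * q ^ lam / (q - 1) ^ nu * ψ q
          = Z * ((q / (q - 1)) ^ nu * q ^ (lam - nu) * ψ q) := by
        rw [Real.div_rpow hq0.le hq1'.le, Real.rpow_sub hq0]
        field_simp
      calc eLpNorm g (ENNReal.ofReal p) μ / ENNReal.ofReal (p ^ (lam - nu) * ψ p)
          ≤ eLpNorm g (ENNReal.ofReal p) μ / 1 := ENNReal.div_le_div_left hζ1 _
        _ = eLpNorm g (ENNReal.ofReal p) μ := by rw [div_one]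
        _ ≤ eLpNorm g (ENNReal.ofReal q) μ := hmono
        _ ≤ ENNReal.ofReal (Z * q ^ lam / (q - 1) ^ nu) * eLpNorm f (ENNReal.ofReal q) μ := h2
        _ ≤ ENNReal.ofReal (Z * q ^ lam / (q - 1) ^ nu) * (ENNReal.ofReal (ψ q) * N) :=
            mul_le_mul_right h3 _
        _ = ENNReal.ofReal (Z * q ^ lam / (q - 1) ^ nu * ψ q) * N := by
            rw [← mul_assoc, ← ENNReal.ofReal_mul (by positivity)]
        _ = _ := by rw [hcoef]
    · have hp1 : (1:ℝ) < p := lt_trans hq1 hqp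
      have hp1' : (0:ℝ) < p - 1 := by linarith
      have hpn : (p - 1) ^ nu ≠ 0 := (Real.rpow_pos_of_pos hp1' nu).ne'
      have hpn' : p ^ nu ≠ 0 := (Real.rpow_pos_of_pos hp0 nu).ne'
      have h2 := hQ p hp1 hpb
      have h3 := hfN p hp hpb
      have hcoef : Z * p ^ lam / (p - 1) ^ nu * ψ p
          = Z * (p / (p - 1)) ^ nu * (p ^ (lam - nu) * ψ p) := by
        rw [Real.div_rpow hp0.le hp1'.le, Real.rpow_sub hp0]
        field_simp
      have hbound : eLpNorm g (ENNReal.ofReal p) μ ≤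
          ENNReal.ofReal (Z * (p / (p - 1)) ^ nu) * N *
            ENNReal.ofReal (p ^ (lam - nu) * ψ p) := by
        calc eLpNorm g (ENNReal.ofReal p) μ
            ≤ ENNReal.ofReal (Z * p ^ lam / (p - 1) ^ nu) * eLpNorm f (ENNReal.ofReal p) μ := h2
          _ ≤ ENNReal.ofReal (Z * p ^ lam / (p - 1) ^ nu) * (ENNReal.ofReal (ψ p) * N) :=
              mul_le_mul_right h3 _
          _ = ENNReal.ofReal (Z * p ^ lam / (p - 1) ^ nu * ψ p) * N := by
              rw [← mul_assoc, ← ENNReal.ofReal_mul (by positivity)]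
          _ = ENNReal.ofReal (Z * (p / (p - 1)) ^ nu) * ENNReal.ofReal (p ^ (lam - nu) * ψ p)
                * N := by
              rw [hcoef, ENNReal.ofReal_mul (by positivity)]
          _ = ENNReal.ofReal (Z * (p / (p - 1)) ^ nu) * N
                * ENNReal.ofReal (p ^ (lam - nu) * ψ p) := by ring
      have hdiv := (ENNReal.div_le_iff hζ0 ENNReal.ofReal_ne_top).mpr hbound
      refine hdiv.trans (mul_le_mul_left (ENNReal.ofReal_le_ofReal ?_) N)
      have hratio : p / (p - 1) ≤ q / (q - 1) := by
        rw [div_le_div_iff₀ hp1' hq1']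
        nlinarith
      have h1 : (p / (p - 1)) ^ nu ≤ (q / (q - 1)) ^ nu :=
        Real.rpow_le_rpow (by positivity) hratio hnu
      have h2' : (1:ℝ) ≤ q ^ (lam - nu) := Real.one_le_rpow hq1.le (by linarith)
      have hq' : (0:ℝ) < (q / (q - 1)) ^ nu := Real.rpow_pos_of_pos (by positivity) _
      have hCD : (1:ℝ) ≤ q ^ (lam - nu) * ψ q := by nlinarith
      refine mul_le_mul_of_nonneg_left ?_ hZ
      rw [mul_assoc]
      exact h1.trans (le_mul_of_one_le_right hq'.le hCD)
  set S := ((fun q : ℝ => (q / (q - 1)) ^ nu * q ^ (lam - nu) * ψ q) ''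
      {q : ℝ | 1 < q ∧ (q : EReal) < b}) with hSdef
  obtain ⟨q₀, hq₀1, hq₀b⟩ : ∃ q : ℝ, 1 < q ∧ (q : EReal) < b := by
    obtain ⟨c, hc1, hcb⟩ := exists_between hb
    have hct : c ≠ ⊤ := (hcb.trans_le le_top).ne
    have hcbot : c ≠ ⊥ := (bot_le.trans_lt hc1).ne'
    lift c to ℝ using ⟨hct, hcbot⟩
    exact ⟨c, by exact_mod_cast hc1, hcb⟩
  have hSne : S.Nonempty := ⟨_, ⟨q₀, ⟨hq₀1, hq₀b⟩, rfl⟩⟩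
  have hSbdd : BddBelow S := by
    refine ⟨0, ?_⟩
    rintro x ⟨q, ⟨hq1, hqb⟩, rfl⟩
    have hψq : (1:ℝ) ≤ ψ q := hψone q hq1.le hqb
    have hq1' : (0:ℝ) < q - 1 := by linarith
    have h1 : (0:ℝ) ≤ (q / (q - 1)) ^ nu := Real.rpow_nonneg (by positivity) _
    have h2 : (0:ℝ) ≤ q ^ (lam - nu) := Real.rpow_nonneg (by linarith) _
    show (0:ℝ) ≤ (q / (q - 1)) ^ nu * q ^ (lam - nu) * ψ q
    exact mul_nonneg (mul_nonneg h1 h2) (by linarith)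
  set F : ℝ → ℝ≥0∞ := fun t => ENNReal.ofReal (Z * t) * N with hFdef
  have hFmono : Monotone F := fun s t hst =>
    mul_le_mul_left (ENNReal.ofReal_le_ofReal (by nlinarith)) N
  have hFcont : ContinuousAt F (sInf S) := by
    apply ENNReal.Tendsto.mul_const
    · exact (ENNReal.continuous_ofReal.continuousAt).comp
        ((continuous_const.mul continuous_id).continuousAt)
    · exact Or.inr hNtop
  have hmap : F (sInf S) = sInf (F '' S) := hFmono.map_csInf_of_continuousAt hFcont hSne hSbdd
  have hfin : eLpNorm g (ENNReal.ofReal p) μ / ENNReal.ofReal (p ^ (lam - nu) * ψ p)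
      ≤ F (sInf S) := by
    rw [hmap]
    refine le_sInf ?_
    rintro x ⟨t, ⟨q, ⟨hq1, hqb⟩, rfl⟩, rfl⟩
    exact key q hq1 hqb
  exact hfin
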